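/- Let N ≥ 4, let v_1,...,v_N be arbitrary real numbers, β_0 = 0, β_1,...,β_{N−1} real constants, f_n = v_n + v_{n+1}, and write the transition matrix T(λ) = V_N(λ + β_{N−1}) ⋯ V_1(λ) as [[A(λ), B(λ)], [C(λ), D(λ)]]. Then B(λ) equals ∏_{n=1}^{N−2} (1 + (λ + β_n) ∂²/∂f_n ∂f_{n+1}) applied to f_1 f_2 ⋯ f_{N−1} and evaluated at f_n = v_n + v_{n+1}; moreover there is a polynomial Ã(λ), given by ∏_{n=2}^{N−2} (1 + (λ + β_n) ∂²/∂f_n ∂f_{n+1}) applied to f_2 ⋯ f_{N−1} and evaluated at f_n = v_n + v_{n+1}, such that A(λ) = B(λ) v_1 + Ã(λ) λ. -/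

import Mathlib

open Polynomial in
/-- The matrix V_n(λ + b) with polynomial entries: rows (v_n, 1), (λ + b + v_n², v_n). -/
noncomputable def polyV (w b : ℝ) : Matrix (Fin 2) (Fin 2) (Polynomial ℝ) :=
  !![C w, 1; X + C b + C (w ^ 2), C w]

/-- Partial transition matrix with polynomial entries:
`polyT v β k = V_k(λ+β_{k-1}) ⋯ V_2(λ+β_1) V_1(λ+β_0)`. -/
noncomputable def polyT (v β : ℕ → ℝ) : ℕ → Matrix (Fin 2) (Fin 2) (Polynomial ℝ)
  | 0 => 1
  | k + 1 => polyV (v (k + 1)) (β k) * polyT v β k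

/-- The Veselov–Shabat operator 1 + (λ + β_n) ∂²/∂f_n ∂f_{n+1} on the polynomial ring
in the variables f_1, f_2, … over ℝ[λ]. -/
noncomputable def vsOp (β : ℕ → ℝ) (n : ℕ) (p : MvPolynomial ℕ (Polynomial ℝ)) :
    MvPolynomial ℕ (Polynomial ℝ) :=
  p + MvPolynomial.C (Polynomial.X + Polynomial.C (β n)) *
      MvPolynomial.pderiv n (MvPolynomial.pderiv (n + 1) p)

/-- F_m(λ) = ∏_{n=m}^{N−2} (1 + (λ + β_n) ∂²/∂f_n ∂f_{n+1}) (f_m f_{m+1} ⋯ f_{N−1});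
for m = N−1 this is just f_{N−1}. -/
noncomputable def vsF (β : ℕ → ℝ) (N m : ℕ) : MvPolynomial ℕ (Polynomial ℝ) :=
  (List.range' m (N - 1 - m)).foldr (vsOp β)
    (∏ n ∈ Finset.Icc m (N - 1), MvPolynomial.X n)

namespace VSaux

open MvPolynomial

abbrev MvP := MvPolynomial ℕ (Polynomial ℝ)

lemma vsOp_add (β : ℕ → ℝ) (n : ℕ) (p q : MvP) :
    vsOp β n (p + q) = vsOp β n p + vsOp β n q := by
  simp only [vsOp, map_add]; ring

lemma vsOp_C_mul (β : ℕ → ℝ) (n : ℕ) (a : Polynomial ℝ) (p : MvP) :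
    vsOp β n (MvPolynomial.C a * p) = MvPolynomial.C a * vsOp β n p := by
  simp only [vsOp, pderiv_C_mul]; ring

lemma vsOp_X_mul (β : ℕ → ℝ) {n N : ℕ} (h1 : N ≠ n) (h2 : N ≠ n + 1) (p : MvP) :
    vsOp β n (MvPolynomial.X N * p) = MvPolynomial.X N * vsOp β n p := by
  simp only [vsOp, pderiv_mul, pderiv_X_of_ne h1, pderiv_X_of_ne h2, zero_mul, zero_add,
    map_add, mul_zero]
  ring

lemma vsOp_of_pderiv_eq_zero (β : ℕ → ℝ) {n : ℕ} {p : MvP}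
    (h : MvPolynomial.pderiv (n + 1) p = 0) : vsOp β n p = p := by
  simp [vsOp, h]

lemma foldr_vsOp_add (β : ℕ → ℝ) (l : List ℕ) (p q : MvP) :
    l.foldr (vsOp β) (p + q) = l.foldr (vsOp β) p + l.foldr (vsOp β) q := by
  induction l with
  | nil => rfl
  | cons a l ih => simp [List.foldr_cons, ih, vsOp_add]

lemma foldr_vsOp_C_mul (β : ℕ → ℝ) (l : List ℕ) (a : Polynomial ℝ) (p : MvP) :
    l.foldr (vsOp β) (MvPolynomial.C a * p) = MvPolynomial.C a * l.foldr (vsOp β) p := by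
  induction l with
  | nil => rfl
  | cons b l ih => simp [List.foldr_cons, ih, vsOp_C_mul]

lemma foldr_vsOp_X_mul (β : ℕ → ℝ) {N : ℕ} {l : List ℕ}
    (h : ∀ n ∈ l, N ≠ n ∧ N ≠ n + 1) (p : MvP) :
    l.foldr (vsOp β) (MvPolynomial.X N * p) = MvPolynomial.X N * l.foldr (vsOp β) p := by
  induction l with
  | nil => rfl
  | cons b l ih =>
    have hb := h b (List.mem_cons_self)
    simp only [List.foldr_cons, ih (fun n hn => h n (List.mem_cons_of_mem b hn))]
    exact vsOp_X_mul β hb.1 hb.2 _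

lemma pderiv_prod_not_mem {s : Finset ℕ} {j : ℕ} (h : j ∉ s) :
    MvPolynomial.pderiv j (∏ n ∈ s, (MvPolynomial.X n : MvP)) = 0 := by
  classical
  induction s using Finset.induction_on with
  | empty => simp
  | @insert a s hx ih =>
    have hj : j ∉ s := fun hj => h (Finset.mem_insert_of_mem hj)
    have hja : j ≠ a := fun hja => h (hja ▸ Finset.mem_insert_self a s)
    rw [Finset.prod_insert hx, pderiv_mul, ih hj, pderiv_X_of_ne (Ne.symm hja)]
    simp

lemma pderiv_prod_mem {s : Finset ℕ} {j : ℕ} (h : j ∈ s) :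
    MvPolynomial.pderiv j (∏ n ∈ s, (MvPolynomial.X n : MvP))
      = ∏ n ∈ s.erase j, (MvPolynomial.X n : MvP) := by
  classical
  rw [← Finset.prod_erase_mul s _ h, pderiv_mul, pderiv_prod_not_mem (Finset.notMem_erase j s),
    pderiv_X_self]
  simp


lemma range'_concat1 (m k : ℕ) : List.range' m (k+1) = List.range' m k ++ [m + k] := by
  rw [List.range'_concat]; norm_num

lemma vsF_rec (β : ℕ → ℝ) (m k : ℕ) (hm : 1 ≤ m) :
    vsF β (m + k + 2) m
      = MvPolynomial.X (m + k + 1) * vsF β (m + k + 1) m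
        + MvPolynomial.C (Polynomial.X + Polynomial.C (β (m + k))) * vsF β (m + k) m := by
  have e1 : m + k + 2 - 1 - m = k + 1 := by omega
  have e2 : m + k + 2 - 1 = m + k + 1 := by omega
  have e3 : m + k + 1 - 1 - m = k := by omega
  have e4 : m + k + 1 - 1 = m + k := by omega
  have hd1 : MvPolynomial.pderiv (m + k + 1)
      (∏ n ∈ Finset.Icc m (m + k + 1), (MvPolynomial.X n : MvP))
      = ∏ n ∈ Finset.Icc m (m + k), (MvPolynomial.X n : MvP) := by
    rw [pderiv_prod_mem (Finset.mem_Icc.mpr ⟨by omega, le_refl _⟩),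
      Finset.Icc_erase_right, Finset.Ico_add_one_right_eq_Icc]
  have hd2 : MvPolynomial.pderiv (m + k)
      (∏ n ∈ Finset.Icc m (m + k), (MvPolynomial.X n : MvP))
      = ∏ n ∈ Finset.Ico m (m + k), (MvPolynomial.X n : MvP) := by
    rw [pderiv_prod_mem (Finset.mem_Icc.mpr ⟨by omega, le_refl _⟩), Finset.Icc_erase_right]
  have hprod : (∏ n ∈ Finset.Icc m (m + k + 1), (MvPolynomial.X n : MvP))
      = MvPolynomial.X (m + k + 1) * ∏ n ∈ Finset.Icc m (m + k), (MvPolynomial.X n : MvP) := by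
    rw [Finset.prod_Icc_succ_top (by omega : m ≤ m + k + 1)]; ring
  have hinner : vsOp β (m + k) (∏ n ∈ Finset.Icc m (m + k + 1), (MvPolynomial.X n : MvP))
      = MvPolynomial.X (m + k + 1) * (∏ n ∈ Finset.Icc m (m + k), (MvPolynomial.X n : MvP))
        + MvPolynomial.C (Polynomial.X + Polynomial.C (β (m + k)))
          * ∏ n ∈ Finset.Ico m (m + k), (MvPolynomial.X n : MvP) := by
    rw [vsOp, hd1, hd2, hprod]
  have hmem : ∀ n ∈ List.range' m k, m + k + 1 ≠ n ∧ m + k + 1 ≠ n + 1 := by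
    intro n hn
    have := List.mem_range'_1.mp hn
    omega
  have htail : (List.range' m k).foldr (vsOp β)
        (∏ n ∈ Finset.Ico m (m + k), (MvPolynomial.X n : MvP))
      = vsF β (m + k) m := by
    cases k with
    | zero =>
      simp only [List.range', List.foldr_nil, vsF]
      have : m + 0 - 1 - m = 0 := by omega
      rw [this]
      simp only [List.range', List.foldr_nil]
      congr 1
      have h1 : Finset.Ico m (m + 0) = ∅ := by simp
      have h2 : Finset.Icc m (m + 0 - 1) = ∅ := by
        apply Finset.Icc_eq_empty; omega
      rw [h1, h2]
    | succ j =>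
      have e5 : m + (j + 1) - 1 - m = j := by omega
      have e6 : m + (j + 1) - 1 = m + j := by omega
      rw [range'_concat1, List.foldr_append, vsF, e5, e6]
      simp only [List.foldr_cons, List.foldr_nil]
      have hid : vsOp β (m + j) (∏ n ∈ Finset.Ico m (m + (j + 1)), (MvPolynomial.X n : MvP))
          = ∏ n ∈ Finset.Ico m (m + (j + 1)), (MvPolynomial.X n : MvP) := by
        apply vsOp_of_pderiv_eq_zero
        apply pderiv_prod_not_mem
        simp only [Finset.mem_Ico]; omega
      rw [hid]
      congr 1
  rw [vsF, e1, e2, range'_concat1, List.foldr_append]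
  simp only [List.foldr_cons, List.foldr_nil]
  rw [hinner, foldr_vsOp_add, foldr_vsOp_C_mul, foldr_vsOp_X_mul β hmem, htail]
  congr 2
  rw [vsF, e3, e4]


lemma polyT_rec (v β : ℕ → ℝ) (k : ℕ) (j : Fin 2) :
    polyT v β (k + 2) 0 j
      = Polynomial.C (v (k + 1) + v (k + 2)) * polyT v β (k + 1) 0 j
        + (Polynomial.X + Polynomial.C (β k)) * polyT v β k 0 j := by
  have h1 : polyT v β (k + 2) = polyV (v (k + 2)) (β (k + 1)) * polyT v β (k + 1) := rfl
  have h2 : polyT v β (k + 1) = polyV (v (k + 1)) (β k) * polyT v β k := rfl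
  rw [h1, h2]
  fin_cases j <;>
  · simp [polyV, Matrix.mul_apply, Matrix.vecMul, dotProduct, Fin.sum_univ_two, map_add]
    ring


lemma vsF_two_one (β : ℕ → ℝ) : vsF β 2 1 = MvPolynomial.X 1 := by
  have h : Finset.Icc (1:ℕ) 1 = {1} := Finset.Icc_self 1
  simp [vsF, h]

lemma vsF_two_two (β : ℕ → ℝ) : vsF β 2 2 = 1 := by
  have h : Finset.Icc (2:ℕ) 1 = ∅ := by decide
  simp [vsF, h]

lemma vsF_three_two (β : ℕ → ℝ) : vsF β 3 2 = MvPolynomial.X 2 := by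
  have h : Finset.Icc (2:ℕ) 2 = {2} := Finset.Icc_self 2
  simp [vsF, h]

lemma vsF_three_one (β : ℕ → ℝ) :
    vsF β 3 1 = MvPolynomial.X 1 * MvPolynomial.X 2
      + MvPolynomial.C (Polynomial.X + Polynomial.C (β 1)) := by
  have h : Finset.Icc (1:ℕ) 2 = {1, 2} := by decide
  have h2 : (2:ℕ) - 1 - 1 = 0 := by norm_num
  simp only [vsF, h]
  norm_num [List.range', vsOp, pderiv_mul, pderiv_X_self, pderiv_X_of_ne,
    Finset.prod_insert, Finset.prod_singleton]


lemma key (v β : ℕ → ℝ) (hβ0 : β 0 = 0) (k : ℕ) :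
    ((polyT v β (k + 2) 0 1
        = MvPolynomial.eval (fun n => Polynomial.C (v n + v (n + 1))) (vsF β (k + 2) 1) ∧
      polyT v β (k + 2) 0 0
        = polyT v β (k + 2) 0 1 * Polynomial.C (v 1)
          + MvPolynomial.eval (fun n => Polynomial.C (v n + v (n + 1))) (vsF β (k + 2) 2)
            * Polynomial.X) ∧
     (polyT v β (k + 3) 0 1
        = MvPolynomial.eval (fun n => Polynomial.C (v n + v (n + 1))) (vsF β (k + 3) 1) ∧
      polyT v β (k + 3) 0 0
        = polyT v β (k + 3) 0 1 * Polynomial.C (v 1)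
          + MvPolynomial.eval (fun n => Polynomial.C (v n + v (n + 1))) (vsF β (k + 3) 2)
            * Polynomial.X)) := by
  induction k with
  | zero =>
    have hT2 : polyT v β 2 = polyV (v 2) (β 1) * (polyV (v 1) (β 0) * 1) := rfl
    have hT3 : polyT v β 3 = polyV (v 3) (β 2) * (polyV (v 2) (β 1) * (polyV (v 1) (β 0) * 1)) :=
      rfl
    refine ⟨⟨?_, ?_⟩, ?_, ?_⟩
    · rw [hT2, vsF_two_one]
      simp [polyV, Matrix.mul_apply, Matrix.vecMul, dotProduct, Fin.sum_univ_two,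
        map_add]
      ring
    · rw [hT2, vsF_two_two]
      simp [polyV, Matrix.mul_apply, Matrix.vecMul, dotProduct, Fin.sum_univ_two,
        map_add, hβ0]
      ring
    · rw [hT3, vsF_three_one]
      simp [polyV, Matrix.mul_apply, Matrix.vecMul, dotProduct, Fin.sum_univ_two,
        map_add, hβ0]
      ring
    · rw [hT3, vsF_three_two]
      simp [polyV, Matrix.mul_apply, Matrix.vecMul, dotProduct, Fin.sum_univ_two,
        map_add, hβ0]
      ring
  | succ k ih =>
    have hB := polyT_rec v β (k + 2) 1
    have hA := polyT_rec v β (k + 2) 0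
    simp only [show k + 2 + 2 = k + 1 + 3 from by omega,
      show k + 2 + 1 = k + 3 from by omega] at hB hA
    have hr1' : MvPolynomial.eval (fun n => Polynomial.C (v n + v (n + 1)))
          (vsF β (k + 1 + 3) 1)
        = Polynomial.C (v (k + 3) + v (k + 1 + 3))
            * MvPolynomial.eval (fun n => Polynomial.C (v n + v (n + 1))) (vsF β (k + 3) 1)
          + (Polynomial.X + Polynomial.C (β (k + 2)))
            * MvPolynomial.eval (fun n => Polynomial.C (v n + v (n + 1))) (vsF β (k + 2) 1) := by
      have h := vsF_rec β 1 (k + 1) (le_refl 1)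
      simp only [show (1:ℕ) + (k + 1) = k + 2 from by omega,
        show k + 2 + 2 = k + 1 + 3 from by omega,
        show k + 2 + 1 = k + 3 from by omega] at h
      rw [h]
      simp only [map_add, map_mul, MvPolynomial.eval_X, MvPolynomial.eval_C,
        show k + 3 + 1 = k + 1 + 3 from by omega]
    have hr2' : MvPolynomial.eval (fun n => Polynomial.C (v n + v (n + 1)))
          (vsF β (k + 1 + 3) 2)
        = Polynomial.C (v (k + 3) + v (k + 1 + 3))
            * MvPolynomial.eval (fun n => Polynomial.C (v n + v (n + 1))) (vsF β (k + 3) 2)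
          + (Polynomial.X + Polynomial.C (β (k + 2)))
            * MvPolynomial.eval (fun n => Polynomial.C (v n + v (n + 1))) (vsF β (k + 2) 2) := by
      have h := vsF_rec β 2 k (by norm_num)
      simp only [show (2:ℕ) + k = k + 2 from by omega,
        show k + 2 + 2 = k + 1 + 3 from by omega,
        show k + 2 + 1 = k + 3 from by omega] at h
      rw [h]
      simp only [map_add, map_mul, MvPolynomial.eval_X, MvPolynomial.eval_C,
        show k + 3 + 1 = k + 1 + 3 from by omega]
    refine ⟨⟨ih.2.1, ih.2.2⟩, ?_, ?_⟩
    · rw [hB, hr1', ih.1.1, ih.2.1]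
    · rw [hA, hB, hr2', ih.1.1, ih.2.1, ih.1.2, ih.2.2, ih.1.1, ih.2.1]
      ring

end VSaux

/-- B(λ) = ∏_{n=1}^{N−2}(1 + (λ+β_n)∂²/∂f_n∂f_{n+1})(f_1⋯f_{N−1}) evaluated
at f_n = v_n + v_{n+1}, and A(λ) = B(λ)v_1 + Ã(λ)λ with
Ã(λ) = ∏_{n=2}^{N−2}(1 + (λ+β_n)∂²/∂f_n∂f_{n+1})(f_2⋯f_{N−1}) evaluated at f_n = v_n + v_{n+1}. -/
theorem transition_matrix_B_and_Atilde (N : ℕ) (hN : 4 ≤ N) (v β : ℕ → ℝ) (hβ0 : β 0 = 0) :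
    polyT v β N 0 1
      = MvPolynomial.eval (fun n => Polynomial.C (v n + v (n + 1))) (vsF β N 1) ∧
    polyT v β N 0 0
      = polyT v β N 0 1 * Polynomial.C (v 1)
        + MvPolynomial.eval (fun n => Polynomial.C (v n + v (n + 1))) (vsF β N 2)
          * Polynomial.X := by
  obtain ⟨k, rfl⟩ : ∃ k, N = k + 2 := ⟨N - 2, by omega⟩
  exact (VSaux.key v β hβ0 k).1
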